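/- For every integer n ≥ 1, there is an index k with k ≤ ⌈(log n)/(log(6/5))⌉ such that the k-th word of the Kolakoski fan has length |w_k| ≥ n. Consequently, the least k with |w_k| ≥ n is at most ⌈(log n)/(log(6/5))⌉, i.e., it is O(log n). -/

import Mathlib

/-- Expansion step of the Kolakoski fan: the `i`-th run of `expand w` has length
equal to the `i`-th letter of `w`, the runs alternating between blocks of `1`s
and blocks of `2`s, starting with a block of `1`s. -/
def expand (w : List ℕ) : List ℕ :=
  (List.range w.length).flatMap fun i =>
    List.replicate (w.getD i 0) (if i % 2 = 0 then 1 else 2)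

/-- The Kolakoski fan: `fan 0 = 122` and `fan (k+1) = expand (fan k)`
(so `fan 1 = 12211`). -/
def fan : ℕ → List ℕ
  | 0 => [1, 2, 2]
  | k + 1 => expand (fan k)

theorem sum_map_range (n:ℕ) (f:ℕ→ℕ) : ((List.range n).map f).sum = ∑ i ∈ Finset.range n, f i := by
  rw [Finset.sum_range, ← List.sum_ofFn, List.ofFn_eq_map, ← List.map_coe_finRange_eq_range (n := n), List.map_map]
  rfl

theorem map_getD_range (w : List ℕ) : (List.range w.length).map (fun i => w.getD i 0) = w := by
  apply List.ext_getElem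
  · simp
  · intro i h1 h2; simp [List.getD_eq_getElem, h2]

theorem length_expand (w : List ℕ) : (expand w).length = w.sum := by
  unfold expand
  rw [List.length_flatMap]
  conv_rhs => rw [← map_getD_range w]
  congr 1
  apply List.map_congr_left
  intro i hi
  simp

theorem sum_expand (w : List ℕ) :
    (expand w).sum = ∑ i ∈ Finset.range w.length,
      w.getD i 0 * (if i % 2 = 0 then 1 else 2) := by
  unfold expand
  rw [List.flatMap, List.sum_flatten, List.map_map, ← sum_map_range]
  congr 1
  apply List.map_congr_left
  intro i hi
  simp [List.sum_replicate, smul_eq_mul]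

theorem oddcount (m : ℕ) : ∑ i ∈ Finset.range m, (if i % 2 = 0 then 0 else 1) = m / 2 := by
  induction m with
  | zero => simp
  | succ m ih => rw [Finset.sum_range_succ, ih]; split <;> omega

theorem mem_fan_pos : ∀ k, ∀ x ∈ fan k, 1 ≤ x := by
  intro k
  cases k with
  | zero => decide
  | succ k =>
    intro x hx
    simp only [fan, expand, List.mem_flatMap, List.mem_range] at hx
    obtain ⟨i, -, hx⟩ := hx
    have := List.eq_of_mem_replicate hx
    split at this <;> omega

theorem sum_le_sum_expand (w : List ℕ) (hw : ∀ x ∈ w, 1 ≤ x) :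
    w.sum + w.length / 2 ≤ (expand w).sum := by
  rw [sum_expand]
  have hws : w.sum = ∑ i ∈ Finset.range w.length, w.getD i 0 := by
    rw [← sum_map_range]; rw [map_getD_range w]
  rw [hws, ← oddcount w.length, ← Finset.sum_add_distrib]
  apply Finset.sum_le_sum
  intro i hi
  simp only [Finset.mem_range] at hi
  have h1 : 1 ≤ w.getD i 0 := hw _ (by rw [List.getD_eq_getElem w 0 hi]; exact List.getElem_mem hi)
  split <;> omega

theorem key : ∀ k, 3 * 6 ^ k ≤ 5 ^ k * (fan k).length := by
  intro k
  induction k using Nat.strong_induction_on with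
  | _ k ih =>
    match k with
    | 0 => decide
    | 1 => decide
    | (k+2) =>
      have ih1 := ih k (by omega)
      have ih2 := ih (k+1) (by omega)
      have hlen1 : (fan (k+1)).length = (fan k).sum := length_expand _
      have hlen2 : (fan (k+2)).length = (fan (k+1)).sum := length_expand _
      have hstep : (fan k).sum + (fan k).length / 2 ≤ (fan (k+1)).sum :=
        sum_le_sum_expand (fan k) (mem_fan_pos k)
      set a := 6 ^ k
      set b := 5 ^ k
      set x := (fan k).length
      set y := (fan (k+1)).length
      set z := (fan (k+2)).length
      have hz : 2 * z + 1 ≥ 2 * y + x := by omega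
      have hba : b ≤ a := Nat.pow_le_pow_left (by norm_num) k
      have h1 : 25 * b * (2 * y + x) ≤ 25 * b * (2 * z + 1) :=
        Nat.mul_le_mul_left _ hz
      have h2 : 3 * a ≤ b * x := ih1
      have h3 : 3 * (6 * a) ≤ 5 * b * y := by
        calc 3 * (6 * a) = 3 * 6 ^ (k+1) := by rw [pow_succ]; ring
        _ ≤ 5 ^ (k+1) * y := ih2
        _ = 5 * b * y := by rw [pow_succ]; ring
      calc 3 * 6 ^ (k+2) = 108 * a := by rw [pow_add]; ring
        _ ≤ 25 * b * z := by nlinarith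
        _ ≤ 5 ^ (k+2) * z := by show 25 * 5 ^ k * z ≤ 5 ^ (k+2) * z; exact le_of_eq (by ring)

/-- For every `n ≥ 1` there is an index
`k ≤ ⌈log n / log (6/5)⌉` whose fan word has length at least `n`; consequently
the least such index is at most `⌈log n / log (6/5)⌉`, i.e. it is `O(log n)`. -/
theorem fan_reaches_n_in_log_steps (n : ℕ) (hn : 1 ≤ n) :
    (∃ k : ℕ, k ≤ ⌈Real.log n / Real.log (6 / 5)⌉₊ ∧ n ≤ (fan k).length) ∧
    sInf {k : ℕ | n ≤ (fan k).length} ≤ ⌈Real.log n / Real.log (6 / 5)⌉₊ := by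
  set K := ⌈Real.log n / Real.log (6 / 5)⌉₊ with hK
  have hlog : (0:ℝ) < Real.log (6 / 5) := Real.log_pos (by norm_num)
  have h1 : Real.log n / Real.log (6 / 5) ≤ K := Nat.le_ceil _
  have h2 : Real.log n ≤ K * Real.log (6 / 5) := (div_le_iff₀ hlog).mp h1
  have hn0 : (0:ℝ) < n := by exact_mod_cast hn
  have h3 : (n:ℝ) ≤ (6 / 5) ^ K := by
    rw [← Real.log_le_log_iff hn0 (by positivity), Real.log_pow]
    exact h2
  have h5 : (0:ℝ) < (5:ℝ) ^ K := by positivity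
  have h4 : ((6:ℝ) / 5) ^ K ≤ (fan K).length := by
    have hk := key K
    have hk' : (3:ℝ) * 6 ^ K ≤ 5 ^ K * (fan K).length := by exact_mod_cast hk
    rw [div_pow, div_le_iff₀ h5]
    nlinarith [pow_pos (show (0:ℝ) < 6 by norm_num) K]
  have hmem : n ≤ (fan K).length := by exact_mod_cast h3.trans h4
  exact ⟨⟨K, le_refl _, hmem⟩, Nat.sInf_le hmem⟩
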